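/- There exist an absolute constant C₀ > 0 and n₀ such that the following holds for all n ≥ n₀: for any integer m with C₀·n ≤ m ≤ exp(n/C₀), setting Δ := C₀·√(log m), for any quasi-orthogonal system x₁, …, x_m ∈ ℝⁿ and any real t ≥ 0.02, one has |B₂ⁿ \ t·Q°| ≤ m^{−10}·|B₂ⁿ|; in particular, since Q_t° = t·Q° ∩ B₂ⁿ, it follows that |Q_t°| ≥ (1 − m^{−10})·|B₂ⁿ|. -/

import Mathlib

open MeasureTheory ProbabilityTheory RealInnerProductSpace Pointwise

/-- The standard Gaussian measure `N(0, I_d)` on `ℝᵈ`. -/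
noncomputable def stdGaussian (d : ℕ) : Measure (EuclideanSpace ℝ (Fin d)) :=
  (Measure.pi fun _ : Fin d => gaussianReal 0 1).map
    (MeasurableEquiv.toLp 2 (Fin d → ℝ))

/-- The Gaussian mean width `w_G(L) = E sup_{x ∈ L} ⟨x, G⟩` of a set `L ⊆ ℝᵈ`. -/
noncomputable def meanWidth {d : ℕ} (L : Set (EuclideanSpace ℝ (Fin d))) : ℝ :=
  ∫ g, sSup ((fun x => ⟪x, g⟫) '' L) ∂(stdGaussian d)

/-- A quasi-orthogonal system with parameter `Δ`: `√n/(2Δ) ≤ ‖x i‖ ≤ 2√n/Δ` for all `i`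
and `|⟨x i, x j⟩| ≤ √n/Δ` for all `i ≠ j`. -/
def QuasiOrth (n : ℕ) (Δ : ℝ) {m : ℕ} (x : Fin m → EuclideanSpace ℝ (Fin n)) : Prop :=
  (∀ i, Real.sqrt n / (2 * Δ) ≤ ‖x i‖ ∧ ‖x i‖ ≤ 2 * Real.sqrt n / Δ) ∧
  ∀ i j, i ≠ j → |⟪x i, x j⟫| ≤ Real.sqrt n / Δ

/-- `Q = conv{±x_i : i ∈ [m]}`. -/
def Qbody {d m : ℕ} (x : Fin m → EuclideanSpace ℝ (Fin d)) :
    Set (EuclideanSpace ℝ (Fin d)) :=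
  convexHull ℝ (Set.range x ∪ Set.range (fun i => -x i))

/-- `Q_t = conv((1/t) Q ∪ B₂ⁿ)`. -/
def Qt {d m : ℕ} (x : Fin m → EuclideanSpace ℝ (Fin d)) (t : ℝ) :
    Set (EuclideanSpace ℝ (Fin d)) :=
  convexHull ℝ ((1 / t) • Qbody x ∪ Metric.closedBall 0 1)

/-- The polar body `L° = {y : ⟨y, z⟩ ≤ 1 for all z ∈ L}`. -/
def polarSet {d : ℕ} (L : Set (EuclideanSpace ℝ (Fin d))) :
    Set (EuclideanSpace ℝ (Fin d)) :=
  {y | ∀ z ∈ L, ⟪y, z⟫ ≤ 1}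

/-! ### Auxiliary lemmas -/

open Metric

lemma polar_convexHull {d : ℕ} (S : Set (EuclideanSpace ℝ (Fin d))) :
    polarSet (convexHull ℝ S) = polarSet S := by
  apply Set.Subset.antisymm
  · intro y hy z hz; exact hy z (subset_convexHull ℝ S hz)
  · intro y hy z hz
    have hconv : Convex ℝ {z : EuclideanSpace ℝ (Fin d) | ⟪y, z⟫ ≤ 1} :=
      convex_halfSpace_le
        ⟨fun a b => inner_add_right _ _ _, fun c a => real_inner_smul_right _ _ _⟩ 1
    exact convexHull_min hy hconv hz

lemma polar_union {d : ℕ} (A B : Set (EuclideanSpace ℝ (Fin d))) :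
    polarSet (A ∪ B) = polarSet A ∩ polarSet B := by
  ext y
  simp only [polarSet, Set.mem_setOf_eq, Set.mem_inter_iff, Set.mem_union]
  constructor
  · exact fun h => ⟨fun z hz => h z (Or.inl hz), fun z hz => h z (Or.inr hz)⟩
  · rintro ⟨h1, h2⟩ z (hz | hz); exacts [h1 z hz, h2 z hz]

lemma polar_ball {d : ℕ} :
    polarSet (closedBall (0 : EuclideanSpace ℝ (Fin d)) 1) = closedBall 0 1 := by
  ext y
  simp only [polarSet, Set.mem_setOf_eq, mem_closedBall, dist_zero_right]
  constructor
  · intro h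
    rcases eq_or_lt_of_le (norm_nonneg y) with h0 | h0
    · simp [← h0]
    · have := h (‖y‖⁻¹ • y) (by
        simp only [mem_closedBall, dist_zero_right, norm_smul, norm_inv, norm_norm]
        rw [inv_mul_cancel₀ h0.ne'])
      rw [real_inner_smul_right, real_inner_self_eq_norm_sq, sq] at this
      rw [← mul_assoc, inv_mul_cancel₀ h0.ne', one_mul] at this
      exact this
  · intro h z hz
    calc ⟪y, z⟫ ≤ ‖y‖ * ‖z‖ := real_inner_le_norm y z
    _ ≤ 1 * 1 := by apply mul_le_mul h hz (norm_nonneg z) zero_le_one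
    _ = 1 := by ring

lemma polar_smul {d : ℕ} (A : Set (EuclideanSpace ℝ (Fin d))) {t : ℝ} (ht : 0 < t) :
    polarSet ((1 / t) • A) = t • polarSet A := by
  ext y
  rw [Set.mem_smul_set_iff_inv_smul_mem₀ ht.ne']
  simp only [polarSet, Set.mem_setOf_eq]
  constructor
  · intro h z hz
    have := h ((1/t) • z) (Set.smul_mem_smul_set hz)
    rw [real_inner_smul_right] at this
    rw [real_inner_smul_left]
    rw [inv_eq_one_div]
    linarith [this]
  · intro h z hz
    rcases hz with ⟨a, ha, rfl⟩
    have := h a ha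
    rw [real_inner_smul_left] at this
    show ⟪y, (1/t) • a⟫ ≤ 1
    rw [real_inner_smul_right]
    rw [inv_eq_one_div] at this
    linarith [this]

lemma cap_subset {d : ℕ} {y u : EuclideanSpace ℝ (Fin d)} {σ : ℝ}
    (hy : ‖y‖ ≤ 1) (hu : ‖u‖ = 1) (hσ0 : 0 ≤ σ) (hσ : σ ≤ ⟪y, u⟫) :
    y ∈ closedBall (σ • u) (Real.sqrt (1 - σ^2)) := by
  rw [mem_closedBall, dist_eq_norm]
  have hsq : ‖y - σ • u‖^2 ≤ 1 - σ^2 := by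
    have h1 : ‖y - σ • u‖^2 = ‖y‖^2 - 2 * (σ * ⟪y, u⟫) + σ^2 := by
      rw [norm_sub_sq_real, real_inner_smul_right, norm_smul, hu]
      simp [abs_of_nonneg hσ0]
    have h2 : ‖y‖^2 ≤ 1 := by
      calc ‖y‖^2 ≤ 1^2 := by apply pow_le_pow_left₀ (norm_nonneg y) hy
      _ = 1 := one_pow 2
    nlinarith [mul_le_mul_of_nonneg_left hσ hσ0]
  calc ‖y - σ • u‖ = Real.sqrt (‖y - σ • u‖^2) := (Real.sqrt_sq (norm_nonneg _)).symm
  _ ≤ Real.sqrt (1 - σ^2) := Real.sqrt_le_sqrt hsq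

lemma cover_lemma {d m : ℕ} (x : Fin m → EuclideanSpace ℝ (Fin d)) {t σ : ℝ}
    (ht : 0 < t) (hσ0 : 0 ≤ σ) (hx : ∀ i, 0 < ‖x i‖ ∧ σ * ‖x i‖ ≤ t) :
    closedBall (0 : EuclideanSpace ℝ (Fin d)) 1 \ t • polarSet (Qbody x) ⊆
      ⋃ i : Fin m, (closedBall (σ • (‖x i‖⁻¹ • x i)) (Real.sqrt (1 - σ^2)) ∪
        closedBall (-(σ • (‖x i‖⁻¹ • x i))) (Real.sqrt (1 - σ^2))) := by
  intro y hy
  obtain ⟨hyB, hyQ⟩ := hy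
  rw [mem_closedBall, dist_zero_right] at hyB
  rw [Set.mem_smul_set_iff_inv_smul_mem₀ ht.ne'] at hyQ
  have hex : ∃ i, t < |⟪y, x i⟫| := by
    by_contra hcon
    push_neg at hcon
    apply hyQ
    rw [Qbody, polar_convexHull]
    rintro z (⟨i, rfl⟩ | ⟨i, rfl⟩)
    · rw [real_inner_smul_left]
      have h2 : ⟪y, x i⟫ ≤ t := (abs_le.1 (hcon i)).2
      rw [inv_eq_one_div]
      rw [div_mul_eq_mul_div, div_le_one ht]
      linarith
    · show ⟪t⁻¹ • y, -(x i)⟫ ≤ 1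
      rw [real_inner_smul_left, inner_neg_right]
      have h2 : -t ≤ ⟪y, x i⟫ := (abs_le.1 (hcon i)).1
      rw [inv_eq_one_div, mul_comm, mul_one_div, div_le_one ht]
      linarith
  obtain ⟨i, hi⟩ := hex
  have hxi := (hx i).1
  have hσt : σ ≤ t / ‖x i‖ := (le_div_iff₀ hxi).2 (hx i).2
  apply Set.mem_iUnion.2
  refine ⟨i, ?_⟩
  have hu : ‖(‖x i‖⁻¹ • x i : EuclideanSpace ℝ (Fin d))‖ = 1 := by
    rw [norm_smul, norm_inv, norm_norm, inv_mul_cancel₀ hxi.ne']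
  rcases lt_abs.mp hi with h | h
  · left
    apply cap_subset hyB hu hσ0
    rw [real_inner_smul_right]
    calc σ ≤ t / ‖x i‖ := hσt
    _ ≤ ⟪y, x i⟫ / ‖x i‖ := by gcongr
    _ = ‖x i‖⁻¹ * ⟪y, x i⟫ := by rw [div_eq_inv_mul]
  · right
    have heq : -(σ • (‖x i‖⁻¹ • x i)) = σ • (‖x i‖⁻¹ • (-(x i))) := by
      simp [smul_neg]
    rw [heq]
    have hu' : ‖(‖x i‖⁻¹ • (-(x i)) : EuclideanSpace ℝ (Fin d))‖ = 1 := by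
      rw [norm_smul, norm_inv, norm_norm, norm_neg, inv_mul_cancel₀ hxi.ne']
    apply cap_subset hyB hu' hσ0
    rw [real_inner_smul_right, inner_neg_right]
    calc σ ≤ t / ‖x i‖ := hσt
    _ ≤ -⟪y, x i⟫ / ‖x i‖ := by gcongr
    _ = ‖x i‖⁻¹ * -⟪y, x i⟫ := by rw [div_eq_inv_mul]

lemma numeric_key {n m : ℕ} (hn : 100 ≤ n) (hm : 10000*(n:ℝ) ≤ m)
    (hm2 : (m:ℝ) ≤ Real.exp (n/10000)) :
    2*(m:ℝ)^11 *
      (Real.sqrt (1 - (min (100*Real.sqrt (Real.log m) / Real.sqrt n) (1/2))^2))^n ≤ 1 := by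
  set L := Real.log m with hLdef
  set σ := min (100*Real.sqrt L / Real.sqrt n) (1/2) with hσdef
  have hn' : (100:ℝ) ≤ n := by exact_mod_cast hn
  have hm1 : (2:ℝ) ≤ m := by nlinarith
  have hmpos : (0:ℝ) < m := by linarith
  have hL2 : Real.log 2 ≤ L := Real.log_le_log (by norm_num) hm1
  have hL0 : 0 < L := lt_of_lt_of_le (Real.log_pos (by norm_num)) hL2
  have hLn : L ≤ n/10000 := by
    calc L ≤ Real.log (Real.exp (n/10000)) := Real.log_le_log hmpos hm2
    _ = n/10000 := Real.log_exp _
  have hσ0 : 0 ≤ σ := le_min (by positivity) (by norm_num)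
  have hkey : Real.log 2 + 11*L ≤ σ^2 * n / 2 := by
    rcases le_total (100*Real.sqrt L / Real.sqrt n) (1/2) with h | h
    · have hσeq : σ = 100*Real.sqrt L / Real.sqrt n := min_eq_left h
      have hsq : σ^2 = 10000*L/n := by
        rw [hσeq, div_pow, mul_pow, Real.sq_sqrt hL0.le,
          Real.sq_sqrt (by positivity : (0:ℝ) ≤ (n:ℝ))]
        norm_num
      have hnpos : (0:ℝ) < n := by linarith
      rw [hsq]
      have heq : 10000*L/(n:ℝ)*(n:ℝ)/2 = 5000*L := by field_simp; ring
      rw [heq]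
      nlinarith
    · have hσeq : σ = 1/2 := min_eq_right h
      have hlog2 : Real.log 2 ≤ 1 := by
        calc Real.log 2 ≤ 2 - 1 := Real.log_le_sub_one_of_pos (by norm_num)
        _ = 1 := by norm_num
      rw [hσeq]
      norm_num
      nlinarith
  have hr : Real.sqrt (1 - σ^2) ≤ Real.exp (-(σ^2)/2) := by
    have h1 : 1 - σ^2 ≤ Real.exp (-(σ^2)) := by
      have := Real.add_one_le_exp (-(σ^2)); linarith
    calc Real.sqrt (1 - σ^2) ≤ Real.sqrt (Real.exp (-(σ^2))) := Real.sqrt_le_sqrt h1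
    _ = Real.exp (-(σ^2)/2) := by
        have heq : (Real.exp (-(σ^2)/2))^2 = Real.exp (-(σ^2)) := by
          rw [sq, ← Real.exp_add]; congr 1; ring
        rw [← heq, Real.sqrt_sq (Real.exp_nonneg _)]
  have hrn : (Real.sqrt (1 - σ^2))^n ≤ Real.exp (-(σ^2)*n/2) := by
    calc (Real.sqrt (1 - σ^2))^n ≤ (Real.exp (-(σ^2)/2))^n :=
      pow_le_pow_left₀ (Real.sqrt_nonneg _) hr n
    _ = Real.exp (-(σ^2)*n/2) := by
        rw [← Real.exp_nat_mul]; congr 1; ring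
  have hm11 : 2*(m:ℝ)^11 ≤ Real.exp (σ^2*n/2) := by
    have hmL : (m:ℝ) = Real.exp L := (Real.exp_log hmpos).symm
    calc 2*(m:ℝ)^11 = Real.exp (Real.log 2) * (Real.exp L)^11 := by
          rw [Real.exp_log (by norm_num : (0:ℝ) < 2), ← hmL]
    _ = Real.exp (Real.log 2 + 11*L) := by
          rw [← Real.exp_nat_mul, ← Real.exp_add]; norm_num
    _ ≤ Real.exp (σ^2*n/2) := Real.exp_le_exp.2 hkey
  calc 2*(m:ℝ)^11 * (Real.sqrt (1 - σ^2))^n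
      ≤ 2*(m:ℝ)^11 * Real.exp (-(σ^2)*n/2) := by
        apply mul_le_mul_of_nonneg_left hrn (by positivity)
    _ ≤ Real.exp (σ^2*n/2) * Real.exp (-(σ^2)*n/2) := by
        apply mul_le_mul_of_nonneg_right hm11 (Real.exp_nonneg _)
    _ = 1 := by rw [← Real.exp_add]; ring_nf; exact Real.exp_zero

/-- Volume of the removed cap: `|B₂ⁿ \ t Q°| ≤ m⁻¹⁰ |B₂ⁿ|`, and consequently
`|Q_t°| ≥ (1 − m⁻¹⁰) |B₂ⁿ|` (here `Q_t° = t Q° ∩ B₂ⁿ`). -/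
theorem stmt_8 :
    ∃ C₀ : ℝ, 0 < C₀ ∧ ∃ n₀ : ℕ, ∀ n : ℕ, n₀ ≤ n →
      ∀ m : ℕ, C₀ * (n : ℝ) ≤ (m : ℝ) → (m : ℝ) ≤ Real.exp ((n : ℝ) / C₀) →
      ∀ x : Fin m → EuclideanSpace ℝ (Fin n),
        QuasiOrth n (C₀ * Real.sqrt (Real.log m)) x →
        ∀ t : ℝ, (0.02 : ℝ) ≤ t →
        volume (Metric.closedBall (0 : EuclideanSpace ℝ (Fin n)) 1 \
            t • polarSet (Qbody x)) ≤
          ((m : ENNReal) ^ 10)⁻¹ *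
            volume (Metric.closedBall (0 : EuclideanSpace ℝ (Fin n)) 1) ∧
        (1 - ((m : ENNReal) ^ 10)⁻¹) *
            volume (Metric.closedBall (0 : EuclideanSpace ℝ (Fin n)) 1) ≤
          volume (polarSet (Qt x t)) := by
  refine ⟨10000, by norm_num, 100, ?_⟩
  intro n hn m hm hm2 x hx t ht
  have hn' : (100:ℝ) ≤ n := by exact_mod_cast hn
  set L := Real.log m with hLdef
  have hm1 : (2:ℝ) ≤ m := by nlinarith
  have hmpos : (0:ℝ) < m := by linarith
  have hL2 : Real.log 2 ≤ L := Real.log_le_log (by norm_num) hm1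
  have hL0 : 0 < L := lt_of_lt_of_le (Real.log_pos (by norm_num)) hL2
  have hsL : 0 < Real.sqrt L := Real.sqrt_pos.2 hL0
  have hsn : 0 < Real.sqrt (n:ℝ) := Real.sqrt_pos.2 (by linarith)
  have hΔ : 0 < 10000 * Real.sqrt L := by positivity
  have ht0 : (0:ℝ) < t := lt_of_lt_of_le (by norm_num) ht
  set σ := min (100*Real.sqrt L / Real.sqrt n) (1/2) with hσdef
  have hσ0 : 0 ≤ σ := le_min (by positivity) (by norm_num)
  have hxpos : ∀ i, 0 < ‖x i‖ := fun i =>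
    lt_of_lt_of_le (by positivity) (hx.1 i).1
  have hσx : ∀ i, σ * ‖x i‖ ≤ t := by
    intro i
    calc σ * ‖x i‖ ≤ (100*Real.sqrt L / Real.sqrt n) *
        (2 * Real.sqrt n / (10000 * Real.sqrt L)) := by
          apply mul_le_mul (min_le_left _ _) (hx.1 i).2 (norm_nonneg _) (by positivity)
    _ = 0.02 := by
          field_simp
          ring
    _ ≤ t := ht
  set r := Real.sqrt (1 - σ^2) with hrdef
  have hr0 : 0 ≤ r := Real.sqrt_nonneg _
  set B := Metric.closedBall (0 : EuclideanSpace ℝ (Fin n)) 1 with hBdef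
  have hballvol : ∀ c : EuclideanSpace ℝ (Fin n),
      volume (Metric.closedBall c r) = ENNReal.ofReal (r ^ n) * volume B := by
    intro c
    rw [Measure.addHaar_closedBall' _ _ hr0, finrank_euclideanSpace, Fintype.card_fin]
  -- Part 1
  have part1 : volume (B \ t • polarSet (Qbody x)) ≤ ((m : ENNReal) ^ 10)⁻¹ * volume B := by
    have hcover := cover_lemma x ht0 hσ0 (fun i => ⟨hxpos i, hσx i⟩)
    have hvol1 : volume (B \ t • polarSet (Qbody x)) ≤
        (m : ENNReal) * (2 * ENNReal.ofReal (r^n)) * volume B := by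
      calc volume (B \ t • polarSet (Qbody x)) ≤
          volume (⋃ i : Fin m,
            (Metric.closedBall (σ • (‖x i‖⁻¹ • x i)) r ∪
             Metric.closedBall (-(σ • (‖x i‖⁻¹ • x i))) r)) := measure_mono hcover
      _ ≤ ∑' i : Fin m, volume
            (Metric.closedBall (σ • (‖x i‖⁻¹ • x i)) r ∪
             Metric.closedBall (-(σ • (‖x i‖⁻¹ • x i))) r) := measure_iUnion_le _
      _ = ∑ i : Fin m, volume
            (Metric.closedBall (σ • (‖x i‖⁻¹ • x i)) r ∪
             Metric.closedBall (-(σ • (‖x i‖⁻¹ • x i))) r) := tsum_fintype _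
      _ ≤ ∑ i : Fin m, (2 * ENNReal.ofReal (r^n) * volume B) := by
          apply Finset.sum_le_sum
          intro i _
          calc volume (Metric.closedBall (σ • (‖x i‖⁻¹ • x i)) r ∪
               Metric.closedBall (-(σ • (‖x i‖⁻¹ • x i))) r) ≤
              volume (Metric.closedBall (σ • (‖x i‖⁻¹ • x i)) r) +
              volume (Metric.closedBall (-(σ • (‖x i‖⁻¹ • x i))) r) := measure_union_le _ _
          _ = 2 * ENNReal.ofReal (r^n) * volume B := by
              rw [hballvol, hballvol]; ring
      _ = (m : ENNReal) * (2 * ENNReal.ofReal (r^n)) * volume B := by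
          rw [Finset.sum_const, Finset.card_univ, Fintype.card_fin, nsmul_eq_mul]
          ring
    refine hvol1.trans (mul_le_mul_left ?_ _)
    rw [ENNReal.le_inv_iff_mul_le]
    have hnum := numeric_key hn hm hm2
    calc (m : ENNReal) * (2 * ENNReal.ofReal (r^n)) * (m : ENNReal)^10
        = ENNReal.ofReal (m:ℝ) * (ENNReal.ofReal 2 * ENNReal.ofReal (r^n)) *
            (ENNReal.ofReal (m:ℝ))^10 := by norm_num
      _ = ENNReal.ofReal ((m:ℝ) * (2 * r^n) * (m:ℝ)^10) := by
          rw [← ENNReal.ofReal_mul (by norm_num : (0:ℝ) ≤ 2),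
              ← ENNReal.ofReal_mul (by positivity : (0:ℝ) ≤ (m:ℝ)),
              ← ENNReal.ofReal_pow (by positivity : (0:ℝ) ≤ (m:ℝ)),
              ← ENNReal.ofReal_mul (by positivity : (0:ℝ) ≤ (m:ℝ) * (2 * r^n))]
      _ ≤ ENNReal.ofReal 1 := ENNReal.ofReal_le_ofReal (by
          calc (m:ℝ) * (2 * r^n) * (m:ℝ)^10 = 2*(m:ℝ)^11 * r^n := by ring
          _ ≤ 1 := hnum)
      _ = 1 := by norm_num
  refine ⟨part1, ?_⟩
  -- Part 2
  have hQt : polarSet (Qt x t) = (t • polarSet (Qbody x)) ∩ B := by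
    rw [Qt, polar_convexHull, polar_union, polar_ball, polar_smul _ ht0]
  have hsub : B ⊆ polarSet (Qt x t) ∪ (B \ t • polarSet (Qbody x)) := by
    intro y hy
    by_cases hmem : y ∈ t • polarSet (Qbody x)
    · left; rw [hQt]; exact ⟨hmem, hy⟩
    · right; exact ⟨hy, hmem⟩
  have hV : volume B ≤ volume (polarSet (Qt x t)) + ((m : ENNReal)^10)⁻¹ * volume B := by
    calc volume B ≤ volume (polarSet (Qt x t) ∪ (B \ t • polarSet (Qbody x))) :=
      measure_mono hsub
    _ ≤ volume (polarSet (Qt x t)) + volume (B \ t • polarSet (Qbody x)) :=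
      measure_union_le _ _
    _ ≤ volume (polarSet (Qt x t)) + ((m : ENNReal)^10)⁻¹ * volume B :=
      add_le_add le_rfl part1
  have hmnat : 2 ≤ m := by exact_mod_cast hm1
  have hmE : (1 : ENNReal) ≤ (m : ENNReal) := by
    exact_mod_cast Nat.one_le_cast.2 (by omega)
  have hε1 : ((m : ENNReal)^10)⁻¹ ≤ 1 :=
    ENNReal.inv_le_one.2 (Left.one_le_pow_of_le hmE 10)
  have hfin : ((m : ENNReal)^10)⁻¹ * volume B ≠ ⊤ := by
    apply ENNReal.mul_ne_top
    · exact (lt_of_le_of_lt hε1 ENNReal.one_lt_top).ne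
    · exact measure_closedBall_lt_top.ne
  have hsum : (1 - ((m : ENNReal)^10)⁻¹) * volume B + ((m : ENNReal)^10)⁻¹ * volume B =
      volume B := by
    rw [← add_mul, tsub_add_cancel_of_le hε1, one_mul]
  rw [← ENNReal.add_le_add_iff_right hfin, hsum]
  exact hV
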